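/- arXiv:1109.0810 — 2 statements merged into one kernel-verified Lean document; each statement's English description precedes it below -/
import Mathlib

section
/- Let B₁(s) = ∏_{p ≤ P} |∑_{k=0}^{β} p^{-sk}|. For s = σ + it with 1/2 + Δ ≤ σ ≤ 1 - Δ, 0 < Δ < 1/4, integer β ≥ 2, there is an absolute constant A such that exp(-(A/Δ)·P^{1/2-Δ}) < B₁(s) < exp((A/Δ)·P^{1/2-Δ}). -/
open Real Complex Finset


lemma factor_upper (z : ℂ) (n : ℕ) (hz : ‖z‖ ≤ 3/4) :
    ‖∑ k ∈ Finset.range n, z ^ k‖ ≤ Real.exp (4 * ‖z‖) := by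
  set x := ‖z‖ with hx
  have hx0 : 0 ≤ x := norm_nonneg z
  have hxlt : x < 1 := lt_of_le_of_lt hz (by norm_num)
  have h1 : ‖∑ k ∈ Finset.range n, z ^ k‖ ≤ ∑ k ∈ Finset.range n, x ^ k := by
    refine le_trans (norm_sum_le _ _) ?_
    simp [norm_pow, hx]
  have h2 : ∑ k ∈ Finset.range n, x ^ k ≤ 1 / (1 - x) := by
    rw [geom_sum_eq (ne_of_lt hxlt)]
    have heq : (x ^ n - 1) / (x - 1) = (1 - x ^ n) / (1 - x) := by
      rw [← neg_sub 1 (x ^ n), ← neg_sub 1 x, neg_div_neg_eq]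
    rw [heq, div_le_div_iff₀ (by linarith) (by linarith)]
    nlinarith [pow_nonneg hx0 n]
  have h3 : 1 / (1 - x) ≤ 1 + 4 * x := by
    rw [div_le_iff₀ (by linarith)]; nlinarith
  have h4 : 1 + 4 * x ≤ Real.exp (4 * x) := by
    have := Real.add_one_le_exp (4 * x); linarith
  linarith

lemma factor_lower (z : ℂ) (β : ℕ) (hβ : 2 ≤ β) (hz : ‖z‖ ≤ 3/4) :
    Real.exp (-(4 * ‖z‖)) ≤ ‖∑ k ∈ Finset.range (β+1), z ^ k‖ := by
  set x := ‖z‖ with hx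
  have hx0 : 0 ≤ x := norm_nonneg z
  have hxlt : x < 1 := lt_of_le_of_lt hz (by norm_num)
  have hz1 : z ≠ 1 := by intro h; rw [hx, h] at hxlt; simp at hxlt
  rw [geom_sum_eq hz1, norm_div]
  have hden_pos : 0 < ‖z - 1‖ := by
    rw [norm_pos_iff]; exact sub_ne_zero.mpr hz1
  have hnum : 1 - x ^ (β+1) ≤ ‖z ^ (β+1) - 1‖ := by
    have h := norm_sub_norm_le (1 : ℂ) (z ^ (β+1))
    simp only [norm_pow, norm_one] at h
    calc 1 - x ^ (β+1) ≤ ‖1 - z ^ (β+1)‖ := h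
      _ = ‖z ^ (β+1) - 1‖ := by
          rw [← norm_neg]; congr 1; ring
  have hden : ‖z - 1‖ ≤ 1 + x := by
    have h := norm_sub_le z 1
    simp only [norm_one] at h
    linarith
  have hx3 : x ^ (β+1) ≤ x ^ 3 := pow_le_pow_of_le_one hx0 (le_of_lt hxlt) (by omega)
  have key : Real.exp (-(4 * x)) ≤ (1 - x ^ (β+1)) / (1 + x) := by
    have h1 : Real.exp (-(4*x)) ≤ 1 / (1 + 4*x) := by
      rw [le_div_iff₀ (by linarith : (0:ℝ) < 1 + 4*x)]
      have he : 1 + 4*x ≤ Real.exp (4*x) := by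
        have := Real.add_one_le_exp (4*x); linarith
      calc Real.exp (-(4*x)) * (1 + 4*x) ≤ Real.exp (-(4*x)) * Real.exp (4*x) :=
            mul_le_mul_of_nonneg_left he (Real.exp_nonneg _)
        _ = 1 := by rw [← Real.exp_add]; simp
    have h2 : 1 / (1 + 4*x) ≤ (1 - x^3) / (1 + x) := by
      rw [div_le_div_iff₀ (by linarith) (by linarith)]
      nlinarith [mul_nonneg hx0 hx0, mul_nonneg (mul_nonneg hx0 hx0) hx0,
        mul_nonneg (mul_nonneg (mul_nonneg hx0 hx0) hx0) (sub_nonneg.mpr hz),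
        mul_nonneg (mul_nonneg hx0 hx0) (sub_nonneg.mpr hz)]
    have h3 : (1 - x^3) / (1 + x) ≤ (1 - x^(β+1)) / (1 + x) := by
      gcongr (?_ : ℝ) / (1+x)
      linarith
    linarith
  refine le_trans key (div_le_div₀ (norm_nonneg _) hnum hden_pos hden)

lemma sum_rpow_bound (a : ℝ) (ha0 : 0 ≤ a) (ha1 : a < 1) (N : ℕ) :
    ∑ n ∈ Finset.Icc 1 N, (n:ℝ) ^ (-a) ≤ 1 + (N:ℝ) ^ (1-a) / (1-a) := by
  have h1a : 0 < 1 - a := by linarith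
  induction N with
  | zero =>
      simp [Real.zero_rpow (ne_of_gt h1a)]
  | succ N ih =>
      rw [Finset.sum_Icc_succ_top (by omega : 1 ≤ N + 1)]
      have key : ((N:ℝ)+1) ^ (-a) ≤ (((N:ℝ)+1) ^ (1-a) - (N:ℝ) ^ (1-a)) / (1-a) := by
        set M : ℝ := (N:ℝ) + 1 with hM
        have hM1 : 1 ≤ M := by simp [hM]
        have hM0 : 0 < M := by linarith
        have hbern := rpow_one_add_le_one_add_mul_self
          (show (-1:ℝ) ≤ -(1/M) by rw [neg_le_neg_iff]; rw [div_le_one hM0]; linarith)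
          (le_of_lt h1a) (by linarith : 1 - a ≤ 1)
        -- (1 - 1/M)^(1-a) ≤ 1 - (1-a)/M
        have hsub : (1:ℝ) + -(1/M) = (N:ℝ)/M := by field_simp; linarith [hM]
        rw [hsub] at hbern
        have hmul := mul_le_mul_of_nonneg_right hbern
          (Real.rpow_nonneg (le_of_lt hM0) (1-a))
        have hl : ((N:ℝ)/M) ^ (1-a) * M ^ (1-a) = (N:ℝ) ^ (1-a) := by
          rw [Real.div_rpow (Nat.cast_nonneg N) (le_of_lt hM0)]
          rw [div_mul_cancel₀ _ (Real.rpow_pos_of_pos hM0 (1-a)).ne']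
        have hMa : M ^ (1-a) / M = M ^ (-a) := by
          have h := Real.rpow_add hM0 (-a) 1
          rw [Real.rpow_one] at h
          rw [show (1:ℝ) - a = -a + 1 by ring, h, mul_div_assoc, div_self hM0.ne', mul_one]
        have hr : (1 + (1-a) * -(1/M)) * M ^ (1-a) = M ^ (1-a) - (1-a) * M ^ (-a) := by
          rw [← hMa]; ring
        rw [hl, hr] at hmul
        rw [le_div_iff₀ h1a]
        push_cast
        linarith
      have h := add_le_add ih key
      have hdiv : (N:ℝ)^(1-a)/(1-a) + (((N:ℝ)+1)^(1-a) - (N:ℝ)^(1-a))/(1-a)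
          = ((N:ℝ)+1)^(1-a)/(1-a) := by ring
      push_cast
      push_cast at h
      linarith

/-- The primes `p ≤ P`. -/
noncomputable def primesUpTo (P : ℝ) : Finset ℕ :=
  (Finset.range (⌊P⌋₊ + 1)).filter (fun p => p.Prime ∧ (p : ℝ) ≤ P)

/-- Lemma 1: for `s = σ + it` with `1/2 + Δ ≤ σ ≤ 1 - Δ`, `0 < Δ < 1/4`, `β ≥ 2`,
the product `B₁(s) = ∏_{p ≤ P} |∑_{k=0}^{β} p^{-sk}|` satisfies
`exp(-(A/Δ)·P^{1/2-Δ}) < B₁(s) < exp((A/Δ)·P^{1/2-Δ})` for an absolute constant `A`. -/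
theorem stmt_8 :
    ∃ A > (0 : ℝ), ∀ (P Δ σ t : ℝ) (β : ℕ), 2 ≤ P → 0 < Δ → Δ < 1 / 4 → 2 ≤ β →
      1 / 2 + Δ ≤ σ → σ ≤ 1 - Δ →
      Real.exp (-(A / Δ) * P ^ (1 / 2 - Δ)) <
        (∏ p ∈ primesUpTo P,
          ‖∑ k ∈ Finset.range (β + 1), ((p : ℂ) ^ (-(σ + t * Complex.I))) ^ k‖) ∧
      (∏ p ∈ primesUpTo P,
          ‖∑ k ∈ Finset.range (β + 1), ((p : ℂ) ^ (-(σ + t * Complex.I))) ^ k‖) <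
        Real.exp ((A / Δ) * P ^ (1 / 2 - Δ)) := by
  refine ⟨20, by norm_num, ?_⟩
  intro P Δ σ t β hP hΔ hΔ4 hβ hσ1 hσ2
  have hP1 : (1:ℝ) ≤ P := by linarith
  have hσpos : 0 < σ := by linarith
  set S := ∑ p ∈ primesUpTo P, (p:ℝ) ^ (-σ) with hS
  set Q := P ^ (1/2 - Δ : ℝ) with hQ
  have hQ1 : 1 ≤ Q := Real.one_le_rpow hP1 (by linarith)
  have hmem : ∀ p ∈ primesUpTo P, 2 ≤ p ∧ p ≤ ⌊P⌋₊ := by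
    intro p hp
    simp only [primesUpTo, Finset.mem_filter, Finset.mem_range] at hp
    exact ⟨hp.2.1.two_le, by omega⟩
  have habs : ∀ p ∈ primesUpTo P,
      ‖(p:ℂ) ^ (-(σ + t * Complex.I) : ℂ)‖ = (p:ℝ) ^ (-σ) := by
    intro p hp
    have hppos : (0:ℝ) < (p:ℝ) := by
      have := (hmem p hp).1; exact_mod_cast by omega
    rw [show ((p:ℕ):ℂ) = (((p:ℝ)):ℂ) by push_cast; ring]
    rw [Complex.norm_cpow_eq_rpow_re_of_pos hppos]
    congr 1
    simp
  have hle34 : ∀ p ∈ primesUpTo P, (p:ℝ) ^ (-σ) ≤ 3/4 := by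
    intro p hp
    have hp2 : (2:ℝ) ≤ (p:ℝ) := by exact_mod_cast (hmem p hp).1
    have h1 : (p:ℝ) ^ (-σ) ≤ (2:ℝ) ^ (-σ) :=
      Real.antitoneOn_rpow_Ioi_of_exponent_nonpos (by linarith)
        (by norm_num : (2:ℝ) ∈ Set.Ioi (0:ℝ)) (by simp only [Set.mem_Ioi]; linarith) hp2
    have h2 : (2:ℝ) ^ (-σ) ≤ (2:ℝ) ^ (-(1/2) : ℝ) :=
      Real.rpow_le_rpow_of_exponent_le (by norm_num) (by linarith)
    have h3 : (2:ℝ) ^ (-(1/2) : ℝ) ≤ 3/4 := by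
      have h43 : (4/3 : ℝ) ≤ (2:ℝ) ^ ((1:ℝ)/2) := by
        rw [← Real.sqrt_eq_rpow]
        rw [show (4/3 : ℝ) = Real.sqrt ((4/3)^2) from (Real.sqrt_sq (by norm_num)).symm]
        apply Real.sqrt_le_sqrt; norm_num
      rw [show (-(1/2) : ℝ) = -((1:ℝ)/2) by norm_num,
        Real.rpow_neg (by norm_num), show (3/4 : ℝ) = (4/3 : ℝ)⁻¹ by norm_num]
      exact inv_anti₀ (by norm_num) h43
    linarith
  -- factor bounds
  have hub : ∀ p ∈ primesUpTo P,
      ‖∑ k ∈ Finset.range (β + 1), ((p : ℂ) ^ (-(σ + t * Complex.I))) ^ k‖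
        ≤ Real.exp (4 * (p:ℝ) ^ (-σ)) := by
    intro p hp
    have h := factor_upper ((p : ℂ) ^ (-(σ + t * Complex.I) : ℂ)) (β+1)
      (by rw [habs p hp]; exact hle34 p hp)
    rwa [habs p hp] at h
  have hlb : ∀ p ∈ primesUpTo P,
      Real.exp (-(4 * (p:ℝ) ^ (-σ))) ≤
        ‖∑ k ∈ Finset.range (β + 1), ((p : ℂ) ^ (-(σ + t * Complex.I))) ^ k‖ := by
    intro p hp
    have h := factor_lower ((p : ℂ) ^ (-(σ + t * Complex.I) : ℂ)) β hβ
      (by rw [habs p hp]; exact hle34 p hp)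
    rwa [habs p hp] at h
  -- product bounds
  have hprod_ub : (∏ p ∈ primesUpTo P,
      ‖∑ k ∈ Finset.range (β + 1), ((p : ℂ) ^ (-(σ + t * Complex.I))) ^ k‖)
        ≤ Real.exp (4 * S) := by
    calc (∏ p ∈ primesUpTo P,
        ‖∑ k ∈ Finset.range (β + 1), ((p : ℂ) ^ (-(σ + t * Complex.I))) ^ k‖)
        ≤ ∏ p ∈ primesUpTo P, Real.exp (4 * (p:ℝ) ^ (-σ)) :=
          Finset.prod_le_prod (fun p _ => norm_nonneg _) hub
      _ = Real.exp (∑ p ∈ primesUpTo P, 4 * (p:ℝ) ^ (-σ)) := (Real.exp_sum _ _).symm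
      _ = Real.exp (4 * S) := by rw [← Finset.mul_sum]
  have hprod_lb : Real.exp (-(4 * S)) ≤ (∏ p ∈ primesUpTo P,
      ‖∑ k ∈ Finset.range (β + 1), ((p : ℂ) ^ (-(σ + t * Complex.I))) ^ k‖) := by
    calc Real.exp (-(4 * S)) = ∏ p ∈ primesUpTo P, Real.exp (-(4 * (p:ℝ) ^ (-σ))) := by
          rw [← Real.exp_sum]; congr 1
          rw [hS, Finset.mul_sum, neg_eq_iff_eq_neg, ← Finset.sum_neg_distrib]
          simp
      _ ≤ _ := Finset.prod_le_prod (fun p _ => Real.exp_nonneg _) hlb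
  -- sum bound
  have hsubset : primesUpTo P ⊆ Finset.Icc 1 ⌊P⌋₊ := by
    intro p hp
    have := hmem p hp
    simp only [Finset.mem_Icc]; omega
  have hSsub : S ≤ ∑ n ∈ Finset.Icc 1 ⌊P⌋₊, (n:ℝ) ^ (-σ) :=
    Finset.sum_le_sum_of_subset_of_nonneg hsubset
      (fun i _ _ => Real.rpow_nonneg (Nat.cast_nonneg i) _)
  have hsum := sum_rpow_bound σ (le_of_lt hσpos) (by linarith) ⌊P⌋₊
  have hfloor : ((⌊P⌋₊ : ℕ) : ℝ) ^ (1 - σ) ≤ Q := by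
    calc ((⌊P⌋₊ : ℕ) : ℝ) ^ (1 - σ) ≤ P ^ (1 - σ) :=
          Real.rpow_le_rpow (Nat.cast_nonneg _) (Nat.floor_le (by linarith)) (by linarith)
      _ ≤ Q := Real.rpow_le_rpow_of_exponent_le hP1 (by linarith)
  have hS2 : S ≤ 2 / Δ * Q := by
    have h1σ : Δ ≤ 1 - σ := by linarith
    have hd : ((⌊P⌋₊ : ℕ) : ℝ) ^ (1 - σ) / (1 - σ) ≤ Q / Δ :=
      div_le_div₀ (by positivity) hfloor hΔ h1σ
    have heq : 2 / Δ * Q - (1 + Q / Δ) = (Q - Δ) / Δ := by field_simp; ring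
    have hge : 0 ≤ (Q - Δ) / Δ := div_nonneg (by linarith) (le_of_lt hΔ)
    linarith
  have h4S : 4 * S < 20 / Δ * Q := by
    have h8 : 4 * S ≤ 8 / Δ * Q := by
      have := mul_le_mul_of_nonneg_left hS2 (by norm_num : (0:ℝ) ≤ 4)
      calc 4 * S ≤ 4 * (2 / Δ * Q) := this
        _ = 8 / Δ * Q := by ring
    have hlt : 8 / Δ * Q < 20 / Δ * Q := by
      apply mul_lt_mul_of_pos_right ?_ (lt_of_lt_of_le one_pos hQ1)
      rw [div_lt_div_iff_of_pos_right hΔ]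
      norm_num
    linarith
  constructor
  · refine lt_of_lt_of_le ?_ hprod_lb
    rw [Real.exp_lt_exp]
    have : -(20 / Δ) * Q = -(20 / Δ * Q) := by ring
    rw [this]
    linarith
  · refine lt_of_le_of_lt hprod_ub ?_
    rw [Real.exp_lt_exp]
    linarith
end

section
/- Suppose a function ζ̃ satisfies |ζ̃(s)| ≥ |χ(s)|·B₂(s)·(Λ(s) - 1) where Λ(s) = B₁(s)/(|χ(s)|·B₂(s)), with B₂(s) ≥ exp(-A(ln P₀)^{1-ε}), |χ(s)| ≥ P₀^{-(2+ε)δ}, and Λ(s) ≥ P₀^{δ}, for δ ∈ (0, Δ₀]. Then |ζ̃(s)| > (1/P₀)·sinh((δ/2)·ln P₀) for all sufficiently large P₀. -/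
open Real

/-- Lemma 6 (inequality 8.4): if `|ζ̃(s)| ≥ |χ(s)|·B₂(s)·(Λ(s) - 1)` with
`Λ(s) = B₁(s)/(|χ(s)|·B₂(s))`, `B₂(s) ≥ exp(-A(ln P₀)^{1-ε})`,
`|χ(s)| ≥ P₀^{-(2+ε)δ}` and `Λ(s) ≥ P₀^{δ}` for `δ ∈ (0, Δ₀]` with
`Δ₀ = √(2A)·(ln P₀)^{-ε/2}`, then `|ζ̃(s)| > (1/P₀)·sinh((δ/2)·ln P₀)` for all
sufficiently large `P₀`. -/
theorem stmt_19 (ε A : ℝ) (hε : 0 < ε) (hε1 : ε < 1) (hA : 0 < A) :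
    ∃ T₀ : ℝ, ∀ P₀ : ℝ, T₀ ≤ P₀ →
      ∀ δ z χa B₁ B₂ Λ : ℝ,
        0 < δ → δ ≤ Real.sqrt (2 * A) * (Real.log P₀) ^ (-(ε / 2)) →
        Λ = B₁ / (χa * B₂) →
        z ≥ χa * B₂ * (Λ - 1) →
        B₂ ≥ Real.exp (-A * (Real.log P₀) ^ (1 - ε)) →
        χa ≥ P₀ ^ (-(2 + ε) * δ) →
        Λ ≥ P₀ ^ δ →
        z > (1 / P₀) * Real.sinh ((δ / 2) * Real.log P₀) := by
  set C : ℝ := (3 / 2 + ε) * Real.sqrt (2 * A) + A with hCdef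
  have hCpos : 0 < C := by
    have := Real.sqrt_pos.mpr (by linarith : (0:ℝ) < 2 * A)
    positivity
  refine ⟨Real.exp (C ^ (2 / ε) + 1), ?_⟩
  intro P₀ hP₀ δ z χa B₁ B₂ Λ hδ hδ₀ hΛdef hz hB₂ hχ hΛ
  have hCp : 0 < C ^ (2 / ε) := Real.rpow_pos_of_pos hCpos _
  have hexpP : Real.exp (C ^ (2 / ε) + 1) ≤ P₀ := hP₀
  have hPpos : 0 < P₀ := lt_of_lt_of_le (Real.exp_pos _) hexpP
  set L : ℝ := Real.log P₀ with hLdef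
  have hLge : C ^ (2 / ε) + 1 ≤ L := by
    have := Real.log_le_log (Real.exp_pos _) hexpP
    rwa [Real.log_exp] at this
  have hL1 : (1 : ℝ) ≤ L := by linarith
  have hLpos : (0 : ℝ) < L := by linarith
  have hP1 : 1 < P₀ := by
    have := Real.exp_lt_exp.mpr (show (0:ℝ) < C ^ (2/ε) + 1 by linarith)
    rw [Real.exp_zero] at this
    exact lt_of_lt_of_le this hexpP
  -- C < L ^ (ε/2)
  have hCL : C < L ^ (ε / 2) := by
    have h1 : C ^ (2 / ε) < L := by linarith
    calc C = (C ^ (2 / ε)) ^ (ε / 2) := by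
            rw [← Real.rpow_mul hCpos.le,
              show 2 / ε * (ε / 2) = 1 by field_simp, Real.rpow_one]
         _ < L ^ (ε / 2) := Real.rpow_lt_rpow hCp.le h1 (by positivity)
  -- exponent inequality
  have hexp : A * L ^ (1 - ε) + (3 / 2 + ε) * δ * L ≤ L := by
    have h1 : L ^ (1 - ε) ≤ L ^ (1 - ε / 2) :=
      Real.rpow_le_rpow_of_exponent_le hL1 (by linarith)
    have h2 : (3 / 2 + ε) * δ * L ≤ (3 / 2 + ε) * Real.sqrt (2 * A) * L ^ (1 - ε / 2) := by
      have hs : δ * L ≤ Real.sqrt (2 * A) * L ^ (1 - ε / 2) := by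
        have : L ^ (-(ε / 2)) * L = L ^ (1 - ε / 2) := by
          have h := Real.rpow_add hLpos (-(ε / 2)) 1
          rw [Real.rpow_one] at h
          rw [show (1 - ε / 2 : ℝ) = -(ε / 2) + 1 by ring, h]
        calc δ * L ≤ Real.sqrt (2 * A) * L ^ (-(ε / 2)) * L := by
              apply mul_le_mul_of_nonneg_right hδ₀ hLpos.le
          _ = Real.sqrt (2 * A) * L ^ (1 - ε / 2) := by rw [mul_assoc, this]
      calc (3 / 2 + ε) * δ * L = (3 / 2 + ε) * (δ * L) := by ring
        _ ≤ (3 / 2 + ε) * (Real.sqrt (2 * A) * L ^ (1 - ε / 2)) := by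
            apply mul_le_mul_of_nonneg_left hs (by linarith)
        _ = (3 / 2 + ε) * Real.sqrt (2 * A) * L ^ (1 - ε / 2) := by ring
    have h3 : C * L ^ (1 - ε / 2) ≤ L := by
      have hsplit : L ^ (1 - ε / 2) = L ^ (-(ε / 2)) * L := by
        have h := Real.rpow_add hLpos (-(ε / 2)) 1
        rw [Real.rpow_one] at h
        rw [show (1 - ε / 2 : ℝ) = -(ε / 2) + 1 by ring, h]
      have hLε : (0:ℝ) < L ^ (ε / 2) := Real.rpow_pos_of_pos hLpos _
      have hneg : L ^ (-(ε / 2)) = (L ^ (ε / 2))⁻¹ := Real.rpow_neg hLpos.le _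
      have : C * L ^ (-(ε / 2)) ≤ 1 := by
        rw [hneg]
        rw [mul_inv_le_iff₀ hLε, one_mul]
        exact hCL.le
      calc C * L ^ (1 - ε / 2) = (C * L ^ (-(ε / 2))) * L := by rw [hsplit]; ring
        _ ≤ 1 * L := mul_le_mul_of_nonneg_right this hLpos.le
        _ = L := one_mul L
    have hA1 : A * L ^ (1 - ε) ≤ A * L ^ (1 - ε / 2) :=
      mul_le_mul_of_nonneg_left h1 hA.le
    calc A * L ^ (1 - ε) + (3 / 2 + ε) * δ * L
        ≤ A * L ^ (1 - ε / 2) + (3 / 2 + ε) * Real.sqrt (2 * A) * L ^ (1 - ε / 2) := by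
          linarith
      _ = C * L ^ (1 - ε / 2) := by rw [hCdef]; ring
      _ ≤ L := h3
  -- positivity facts
  have hXpos : (0:ℝ) < P₀ ^ (-(2 + ε) * δ) := Real.rpow_pos_of_pos hPpos _
  have hYpos : (0:ℝ) < Real.exp (-A * L ^ (1 - ε)) := Real.exp_pos _
  have hWnn : (0:ℝ) ≤ P₀ ^ δ - 1 := by
    have : (1:ℝ) ≤ P₀ ^ δ := Real.one_le_rpow hP1.le hδ.le
    linarith
  -- lower bound for z
  have hzlb : P₀ ^ (-(2 + ε) * δ) * Real.exp (-A * L ^ (1 - ε)) * (P₀ ^ δ - 1) ≤ z := by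
    refine le_trans ?_ hz
    have hχpos : 0 < χa := lt_of_lt_of_le hXpos hχ
    have hB₂pos : 0 < B₂ := lt_of_lt_of_le hYpos hB₂
    have h1 : P₀ ^ (-(2 + ε) * δ) * Real.exp (-A * L ^ (1 - ε)) ≤ χa * B₂ :=
      mul_le_mul hχ hB₂ hYpos.le hχpos.le
    have h2 : P₀ ^ δ - 1 ≤ Λ - 1 := by linarith
    exact mul_le_mul h1 h2 hWnn (by positivity)
  -- rewrite via sinh
  have hrw : ∀ x : ℝ, P₀ ^ x = Real.exp (x * L) := fun x => by
    rw [Real.rpow_def_of_pos hPpos, mul_comm]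
  have hkey : P₀ ^ (-(2 + ε) * δ) * (P₀ ^ δ - 1)
      = P₀ ^ (-(3 / 2 + ε) * δ) * (2 * Real.sinh ((δ / 2) * L)) := by
    rw [Real.sinh_eq, hrw, hrw, hrw]
    rw [mul_sub, mul_one, ← Real.exp_add]
    have e1 : Real.exp (-(3 / 2 + ε) * δ * L) * (2 * ((Real.exp (δ / 2 * L) - Real.exp (-(δ / 2 * L))) / 2))
        = Real.exp (-(3 / 2 + ε) * δ * L + δ / 2 * L) - Real.exp (-(3 / 2 + ε) * δ * L + -(δ / 2 * L)) := by
      rw [Real.exp_add, Real.exp_add]; ring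
    rw [e1]
    congr 2 <;> ring
  have hsinh : 0 < Real.sinh ((δ / 2) * L) :=
    Real.sinh_pos_iff.mpr (by positivity)
  -- final comparison
  have hfinal : (1 / P₀) * Real.sinh ((δ / 2) * L)
      < P₀ ^ (-(2 + ε) * δ) * Real.exp (-A * L ^ (1 - ε)) * (P₀ ^ δ - 1) := by
    have hre : P₀ ^ (-(2 + ε) * δ) * Real.exp (-A * L ^ (1 - ε)) * (P₀ ^ δ - 1)
        = (Real.exp (-A * L ^ (1 - ε)) * P₀ ^ (-(3 / 2 + ε) * δ) * 2) * Real.sinh ((δ / 2) * L) := by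
      calc P₀ ^ (-(2 + ε) * δ) * Real.exp (-A * L ^ (1 - ε)) * (P₀ ^ δ - 1)
          = Real.exp (-A * L ^ (1 - ε)) * (P₀ ^ (-(2 + ε) * δ) * (P₀ ^ δ - 1)) := by ring
        _ = _ := by rw [hkey]; ring
    rw [hre]
    apply mul_lt_mul_of_pos_right _ hsinh
    have h1p : 1 / P₀ = Real.exp (-L) := by
      rw [Real.exp_neg, hLdef, Real.exp_log hPpos, one_div]
    rw [h1p, hrw]
    have hle : Real.exp (-L) ≤ Real.exp (-A * L ^ (1 - ε)) * Real.exp (-(3 / 2 + ε) * δ * L) := by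
      rw [← Real.exp_add]
      apply Real.exp_le_exp.mpr
      linarith [hexp]
    calc Real.exp (-L) ≤ Real.exp (-A * L ^ (1 - ε)) * Real.exp (-(3 / 2 + ε) * δ * L) := hle
      _ < Real.exp (-A * L ^ (1 - ε)) * Real.exp (-(3 / 2 + ε) * δ * L) * 2 := by
          have hp := mul_pos (Real.exp_pos (-A * L ^ (1 - ε)))
            (Real.exp_pos (-(3 / 2 + ε) * δ * L))
          linarith
  exact lt_of_lt_of_le hfinal hzlb
end
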